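/- Let {X_i, i = 1, ..., n} and {Y_i, i = 1, ..., n} be independent i.i.d. samples from the unit exponential distribution, with order statistics X_(1) ≤ ... ≤ X_(n) and Y_(1) ≤ ... ≤ Y_(n). Let F(x) = 1 - e^{-x} be the unit exponential CDF, and suppose thresholds 0 < u_n < v_n satisfy min{F(u_n), 1 - F(v_n)}/√(log n / n) → ∞ as n → ∞. Then q_n^{(u_n, v_n)} := max_{1 ≤ i ≤ n} [max{min{v_n, X_(i)}, u_n} / max{min{v_n, Y_(i)}, u_n}] converges in probability to 1 as n → ∞. -/

import Mathlib

open MeasureTheory ProbabilityTheory Filter Finset Real Topology ENNReal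

/-- `orderStat n v i` is the `i`-th order statistic (1-indexed) of the values
`v 0, …, v (n-1)`, i.e. the `i`-th smallest among them. -/
noncomputable def orderStat (n : ℕ) (v : ℕ → ℝ) (i : ℕ) : ℝ :=
  ((List.ofFn fun j : Fin n => v j).insertionSort (· ≤ ·)).getD (i - 1) 0

/-- The cumulative distribution function of the unit exponential distribution. -/
noncomputable def unitExpCDF (x : ℝ) : ℝ := if 0 ≤ x then 1 - Real.exp (-x) else 0

section Aux

set_option linter.unusedSectionVars false

/-! ### Sorted lists and order statistics -/

lemma sorted_getD_le_iff {l : List ℝ} (hl : l.Pairwise (· ≤ ·)) {k : ℕ} (hk : k < l.length)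
    (t : ℝ) : l.getD k 0 ≤ t ↔ k + 1 ≤ l.countP (fun x => decide (x ≤ t)) := by
  rw [List.getD_eq_getElem l 0 hk]
  constructor
  · intro h
    have h1 : l.countP (fun x => decide (x ≤ t)) =
        (l.take (k+1)).countP (fun x => decide (x ≤ t)) +
        (l.drop (k+1)).countP (fun x => decide (x ≤ t)) := by
      rw [← List.countP_append, List.take_append_drop]
    have h2 : (l.take (k+1)).countP (fun x => decide (x ≤ t)) = k + 1 := by
      rw [List.countP_eq_length.mpr, List.length_take]
      · omega
      · intro a ha
        obtain ⟨j, hj, rfl⟩ := List.mem_iff_getElem.mp ha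
        have hj' : j < k + 1 := lt_of_lt_of_le hj (by simp)
        rw [List.getElem_take]
        have : l[j] ≤ l[k] := by
          rcases eq_or_lt_of_le (Nat.lt_succ_iff.mp hj') with h' | h'
          · subst h'; exact le_refl _
          · exact hl.rel_get_of_lt (a := ⟨j, by omega⟩) (b := ⟨k, hk⟩) h'
        simpa using le_trans this h
    omega
  · intro h
    by_contra hlt
    push_neg at hlt
    have h1 : l.countP (fun x => decide (x ≤ t)) =
        (l.take k).countP (fun x => decide (x ≤ t)) +
        (l.drop k).countP (fun x => decide (x ≤ t)) := by
      rw [← List.countP_append, List.take_append_drop]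
    have h2 : (l.drop k).countP (fun x => decide (x ≤ t)) = 0 := by
      rw [List.countP_eq_zero]
      intro a ha
      obtain ⟨j, hj, rfl⟩ := List.mem_iff_getElem.mp ha
      have hkj : k + j < l.length := by
        have : (l.drop k).length = l.length - k := List.length_drop; omega
      rw [List.getElem_drop]
      have : l[k] ≤ l[k + j] := by
        rcases Nat.eq_zero_or_pos j with rfl | hj0
        · simp
        · simpa using hl.rel_get_of_lt (a := ⟨k, hk⟩)
            (b := ⟨k + j, hkj⟩) (by simp [Fin.lt_def]; omega)
      simp only [decide_eq_true_eq]
      intro hle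
      exact absurd (le_trans this hle) (not_le.mpr hlt)
    have h3 : (l.take k).countP (fun x => decide (x ≤ t)) ≤ k := by
      calc (l.take k).countP _ ≤ (l.take k).length := List.countP_le_length
        _ ≤ k := by simp
    omega

lemma orderStat_le_iff {n : ℕ} (w : ℕ → ℝ) {i : ℕ} (hi : i < n) (t : ℝ) :
    orderStat n w (i + 1) ≤ t ↔
      (i + 1 : ℕ) ≤ (List.ofFn fun j : Fin n => w j).countP (fun x => decide (x ≤ t)) := by
  unfold orderStat
  have hp := List.perm_insertionSort (· ≤ ·) (List.ofFn fun j : Fin n => w j)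
  have hs : (List.insertionSort (· ≤ ·) (List.ofFn fun j : Fin n => w j)).Pairwise (· ≤ ·) :=
    List.pairwise_insertionSort _ _
  have hlen : (List.insertionSort (· ≤ ·) (List.ofFn fun j : Fin n => w j)).length = n := by
    rw [hp.length_eq, List.length_ofFn]
  rw [Nat.add_sub_cancel, sorted_getD_le_iff hs (by omega), hp.countP_eq]

lemma countP_eq_sum_ind {n : ℕ} (w : ℕ → ℝ) (t : ℝ) :
    (((List.ofFn fun j : Fin n => w j).countP (fun x => decide (x ≤ t)) : ℕ) : ℝ) =
      ∑ j ∈ Finset.range n, (if w j ≤ t then (1:ℝ) else 0) := by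
  induction n generalizing w with
  | zero => simp
  | succ n ih =>
    rw [List.ofFn_succ, List.countP_cons, Finset.sum_range_succ']
    push_cast
    simp only [Fin.val_zero, Fin.val_succ]
    rw [ih (fun j => w (j + 1))]
    by_cases h : w 0 ≤ t <;> simp [h, add_comm]

/-! ### Properties of the unit exponential CDF and its inverse -/

noncomputable def expQ (p : ℝ) : ℝ := -Real.log (1 - p)

lemma unitExpCDF_nonneg (x : ℝ) : 0 ≤ unitExpCDF x := by
  unfold unitExpCDF
  split
  · have : Real.exp (-x) ≤ 1 := Real.exp_le_one_iff.mpr (by linarith)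
    linarith
  · exact le_rfl

lemma unitExpCDF_lt_one (x : ℝ) : unitExpCDF x < 1 := by
  unfold unitExpCDF
  split
  · have : 0 < Real.exp (-x) := Real.exp_pos _
    linarith
  · norm_num

lemma unitExpCDF_le_self {x : ℝ} (hx : 0 ≤ x) : unitExpCDF x ≤ x := by
  unfold unitExpCDF
  rw [if_pos hx]
  have := Real.add_one_le_exp (-x)
  linarith

lemma unitExpCDF_mono {x y : ℝ} (h : x ≤ y) : unitExpCDF x ≤ unitExpCDF y := by
  unfold unitExpCDF
  split <;> split <;> rename_i h1 h2
  · have : Real.exp (-y) ≤ Real.exp (-x) := Real.exp_le_exp.mpr (by linarith)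
    linarith
  · linarith
  · have : Real.exp (-y) ≤ 1 := Real.exp_le_one_iff.mpr (by linarith)
    linarith
  · exact le_rfl

lemma unitExpCDF_pos {x : ℝ} (hx : 0 < x) : 0 < unitExpCDF x := by
  unfold unitExpCDF
  rw [if_pos hx.le]
  have : Real.exp (-x) < 1 := Real.exp_lt_one_iff.mpr (by linarith)
  linarith

lemma unitExpCDF_expQ {p : ℝ} (hp : 0 ≤ p) (hp1 : p < 1) : unitExpCDF (expQ p) = p := by
  unfold unitExpCDF expQ
  rw [if_pos]
  · rw [neg_neg, Real.exp_log (by linarith)]; ring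
  · have := Real.log_nonpos (by linarith : (0:ℝ) ≤ 1 - p) (by linarith)
    linarith

lemma expQ_unitExpCDF {x : ℝ} (hx : 0 ≤ x) : expQ (unitExpCDF x) = x := by
  unfold expQ unitExpCDF
  rw [if_pos hx]
  simp [Real.log_exp]

lemma expQ_mono {p q : ℝ} (hpq : p ≤ q) (hq : q < 1) : expQ p ≤ expQ q := by
  unfold expQ
  have := Real.log_le_log (by linarith : (0:ℝ) < 1 - q) (by linarith : 1 - q ≤ 1 - p)
  linarith

lemma expQ_gap {a b : ℝ} (ha : 0 ≤ a) (hab : a ≤ b) (hb : b < 1) :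
    expQ b - expQ a ≤ (b - a) / (1 - b) := by
  unfold expQ
  have h1 : 0 < 1 - b := by linarith
  have h2 : 0 < 1 - a := by linarith
  have h3 : Real.log (1 - a) - Real.log (1 - b) = Real.log ((1 - a) / (1 - b)) := by
    rw [Real.log_div (by linarith) (by linarith)]
  have h4 : Real.log ((1 - a) / (1 - b)) ≤ (1 - a) / (1 - b) - 1 :=
    Real.log_le_sub_one_of_pos (by positivity)
  have h5 : (1 - a) / (1 - b) - 1 = (b - a) / (1 - b) := by
    field_simp
    ring
  linarith [h3, h4, h5.symm ▸ h4]

/-! ### The deterministic sandwich lemma -/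

lemma clip_sandwich {u v δ p : ℝ} (hu : 0 < u) (huv : u < v)
    (hδ : 0 < δ) (hδm : 4 * δ ≤ min (unitExpCDF u) (1 - unitExpCDF v)) :
    u ≤ expQ (min (max (p - δ) (unitExpCDF u)) (unitExpCDF v)) ∧
    expQ (min (max (p - δ) (unitExpCDF u)) (unitExpCDF v)) ≤
      expQ (min (max (p + δ) (unitExpCDF u)) (unitExpCDF v)) ∧
    expQ (min (max (p + δ) (unitExpCDF u)) (unitExpCDF v)) ≤ v ∧
    expQ (min (max (p + δ) (unitExpCDF u)) (unitExpCDF v)) ≤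
      expQ (min (max (p - δ) (unitExpCDF u)) (unitExpCDF v)) *
        (1 + 4 * Real.exp 1 * δ / min (unitExpCDF u) (1 - unitExpCDF v)) := by
  set Fu := unitExpCDF u with hFudef
  set Fv := unitExpCDF v with hFvdef
  set m := min Fu (1 - Fv) with hmdef
  set a := min (max (p - δ) Fu) Fv with hadef
  set b := min (max (p + δ) Fu) Fv with hbdef
  have hFu0 : 0 < Fu := unitExpCDF_pos hu
  have hFv1 : Fv < 1 := unitExpCDF_lt_one v
  have hFuv : Fu ≤ Fv := unitExpCDF_mono huv.le
  have hm0 : 0 < m := by linarith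
  have hmFu : m ≤ Fu := min_le_left _ _
  have hmFv : m ≤ 1 - Fv := min_le_right _ _
  have hFa : Fu ≤ a := le_min (le_max_right _ _) hFuv
  have hFb : Fu ≤ b := le_min (le_max_right _ _) hFuv
  have haFv : a ≤ Fv := min_le_right _ _
  have hbFv : b ≤ Fv := min_le_right _ _
  have hab : a ≤ b := min_le_min (max_le_max (by linarith) le_rfl) le_rfl
  have hb1 : b < 1 := lt_of_le_of_lt hbFv hFv1
  have ha0 : 0 ≤ a := le_trans hFu0.le hFa
  have hba : b ≤ a + 2 * δ := by
    have h1 : max (p + δ) Fu ≤ max (p - δ) Fu + 2 * δ :=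
      max_le (by linarith [le_max_left (p - δ) Fu]) (by linarith [le_max_right (p - δ) Fu])
    calc b ≤ min (max (p - δ) Fu + 2 * δ) (Fv + 2 * δ) := min_le_min h1 (by linarith)
      _ = a + 2 * δ := by rw [hadef, min_add_add_right]
  set ℓ := expQ a with hldef
  set h := expQ b with hhdef
  have hul : u ≤ ℓ := by
    rw [hldef, ← expQ_unitExpCDF hu.le]
    exact expQ_mono hFa (lt_of_le_of_lt haFv hFv1)
  have hlh : ℓ ≤ h := expQ_mono hab hb1
  have hhv : h ≤ v := by
    rw [hhdef, ← expQ_unitExpCDF (by linarith : (0:ℝ) ≤ v)]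
    exact expQ_mono hbFv hFv1
  have hgap : h - ℓ ≤ 2 * δ / (1 - b) := by
    calc h - ℓ ≤ (b - a) / (1 - b) := expQ_gap ha0 hab hb1
      _ ≤ 2 * δ / (1 - b) :=
          (div_le_div_iff_of_pos_right (by linarith : (0:ℝ) < 1 - b)).mpr (by linarith)
  have hFuu : Fu ≤ u := unitExpCDF_le_self hu.le
  have hml : m ≤ ℓ := by linarith
  have he1 : (1:ℝ) ≤ Real.exp 1 := by linarith [Real.add_one_le_exp (1:ℝ)]
  refine ⟨hul, hlh, hhv, ?_⟩
  rcases le_or_gt b (1 - Real.exp (-1)) with hcase | hcase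
  · have h1b : Real.exp (-1) ≤ 1 - b := by linarith
    have hexp : Real.exp (-1) = (Real.exp 1)⁻¹ := by
      rw [Real.exp_neg]
    have hgap2 : h - ℓ ≤ 2 * δ * Real.exp 1 := by
      have hpos : (0:ℝ) < Real.exp (-1) := Real.exp_pos _
      calc h - ℓ ≤ 2 * δ / (1 - b) := hgap
        _ ≤ 2 * δ / Real.exp (-1) := by
            apply div_le_div_of_nonneg_left (by linarith) hpos h1b
        _ = 2 * δ * Real.exp 1 := by rw [hexp]; field_simp
    rw [mul_add, mul_one]
    have : ℓ * (4 * Real.exp 1 * δ / m) ≥ 2 * δ * Real.exp 1 := by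
      rw [ge_iff_le, ← sub_nonneg]
      have : ℓ * (4 * Real.exp 1 * δ / m) - 2 * δ * Real.exp 1 =
          (Real.exp 1 * δ) * (4 * ℓ / m - 2) := by field_simp
      rw [this]
      have h4 : 4 * ℓ / m - 2 ≥ 0 := by
        have h5 : ℓ / m ≥ 1 := (one_le_div hm0).mpr hml
        have h6 : 4 * ℓ / m = 4 * (ℓ / m) := by ring
        linarith [h6 ▸ (by linarith : 4 * (ℓ / m) ≥ 4)]
      positivity
    linarith
  · have hh1 : (1:ℝ) ≤ h := by
      have : expQ (1 - Real.exp (-1)) = 1 := by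
        unfold expQ
        rw [show (1:ℝ) - (1 - Real.exp (-1)) = Real.exp (-1) by ring, Real.log_exp]
        ring
      rw [← this]
      exact expQ_mono hcase.le hb1
    have h1b : m ≤ 1 - b := by linarith
    have hgap2 : h - ℓ ≤ 2 * δ / m :=
      le_trans hgap (div_le_div_of_nonneg_left (by linarith) hm0 h1b)
    have hhalf : 2 * δ / m ≤ 1 / 2 := by
      rw [div_le_div_iff₀ hm0 (by norm_num)]
      linarith
    have hl2 : (1:ℝ)/2 ≤ ℓ := by linarith
    rw [mul_add, mul_one]
    have : ℓ * (4 * Real.exp 1 * δ / m) ≥ 2 * δ / m := by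
      have h2 : ℓ * (4 * Real.exp 1 * δ / m) ≥ (1/2) * (4 * 1 * δ / m) := by
        apply mul_le_mul hl2 ?_ (by positivity) (by linarith)
        apply (div_le_div_iff_of_pos_right hm0).mpr
        nlinarith
      calc 2 * δ / m = (1/2) * (4 * 1 * δ / m) := by ring
        _ ≤ _ := h2
    linarith

end Aux

section Prob1
set_option linter.unusedSectionVars false
variable {Ω : Type*} [MeasurableSpace Ω] {μ : Measure Ω} [IsProbabilityMeasure μ]

lemma integral_ind {Z : Ω → ℝ} (hZ : Measurable Z) {t p : ℝ} (hp : 0 ≤ p)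
    (hμ : μ {ω | Z ω ≤ t} = ENNReal.ofReal p) :
    ∫ ω, (if Z ω ≤ t then (1:ℝ) else 0) ∂μ = p := by
  have hms : MeasurableSet {ω | Z ω ≤ t} := hZ measurableSet_Iic
  have : (fun ω => if Z ω ≤ t then (1:ℝ) else 0) =
      Set.indicator {ω | Z ω ≤ t} (fun _ => (1:ℝ)) := by
    ext ω; by_cases h : Z ω ≤ t <;> simp [h, Set.indicator, Set.mem_setOf_eq]
  rw [this, integral_indicator_const _ hms, measureReal_def, hμ, smul_eq_mul, mul_one,
    ENNReal.toReal_ofReal hp]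

lemma mgf_ind {Z : Ω → ℝ} (hZ : Measurable Z) {t p : ℝ} (hp : 0 ≤ p)
    (hμ : μ {ω | Z ω ≤ t} = ENNReal.ofReal p) (s : ℝ) :
    mgf (fun ω => if Z ω ≤ t then (1:ℝ) else 0) μ s = 1 + p * (Real.exp s - 1) := by
  unfold mgf
  have hkey : ∀ ω : Ω, Real.exp (s * (if Z ω ≤ t then (1:ℝ) else 0)) =
      1 + (Real.exp s - 1) * (if Z ω ≤ t then (1:ℝ) else 0) := by
    intro ω; by_cases h : Z ω ≤ t <;> simp [h]
  simp only [hkey]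
  rw [integral_add (integrable_const 1), integral_const]
  · rw [integral_const_mul, integral_ind hZ hp hμ]
    simp [mul_comm]
  · apply Integrable.const_mul
    refine Integrable.mono' (integrable_const (1:ℝ)) ?_ (ae_of_all _ fun ω => ?_)
    · exact ((Measurable.ite (hZ measurableSet_Iic) measurable_const
        measurable_const).aestronglyMeasurable)
    · by_cases h : Z ω ≤ t <;> simp [h]

lemma exp_sub_one_le (s : ℝ) (hs : |s| ≤ 1) : Real.exp s - 1 ≤ s + s ^ 2 := by
  have h := Real.exp_bound hs (n := 2) (by norm_num)
  have h2 : |Real.exp s - (1 + s)| ≤ |s| ^ 2 * (3 / 4) := by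
    have := h
    simp [Finset.sum_range_succ] at this
    convert this using 2 <;> norm_num
  have := abs_le.mp h2
  nlinarith [sq_abs s, sq_nonneg s]

lemma mgf_ind_le {Z : Ω → ℝ} (hZ : Measurable Z) {t p : ℝ} (hp : 0 ≤ p) (hp1 : p ≤ 1)
    (hμ : μ {ω | Z ω ≤ t} = ENNReal.ofReal p) {s : ℝ} (hs : |s| ≤ 1) :
    mgf (fun ω => if Z ω ≤ t then (1:ℝ) else 0) μ s ≤ Real.exp (p * s + s ^ 2) := by
  rw [mgf_ind hZ hp hμ]
  calc 1 + p * (Real.exp s - 1) ≤ Real.exp (p * (Real.exp s - 1)) := by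
        linarith [Real.add_one_le_exp (p * (Real.exp s - 1))]
    _ ≤ Real.exp (p * s + s ^ 2) := by
        apply Real.exp_le_exp.mpr
        have h1 : Real.exp s - 1 ≤ s + s ^ 2 := exp_sub_one_le s hs
        nlinarith [sq_nonneg s]

lemma integrable_exp_sum_ind {ι : Type*} {g : ι → Ω → ℝ} (hmeas : ∀ k, Measurable (g k))
    (s : Finset ι) (hval : ∀ k ω, 0 ≤ g k ω ∧ g k ω ≤ 1) (t : ℝ) :
    Integrable (fun ω => Real.exp (t * ∑ k ∈ s, g k ω)) μ := by
  have hm : Measurable (fun ω => ∑ k ∈ s, g k ω) := by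
    exact Finset.measurable_sum s fun k _ => hmeas k
  refine Integrable.mono' (integrable_const (Real.exp (|t| * s.card))) ?_ (ae_of_all _ fun ω => ?_)
  · exact ((hm.const_mul t).exp).aestronglyMeasurable
  · rw [Real.norm_eq_abs, Real.abs_exp]
    apply Real.exp_le_exp.mpr
    have h0 : 0 ≤ ∑ k ∈ s, g k ω := Finset.sum_nonneg fun k _ => (hval k ω).1
    have h1 : ∑ k ∈ s, g k ω ≤ s.card := by
      calc ∑ k ∈ s, g k ω ≤ ∑ k ∈ s, 1 := Finset.sum_le_sum fun k _ => (hval k ω).2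
        _ = s.card := by simp
    calc t * ∑ k ∈ s, g k ω ≤ |t| * ∑ k ∈ s, g k ω := by
          apply mul_le_mul_of_nonneg_right (le_abs_self t) h0
      _ ≤ |t| * s.card := by apply mul_le_mul_of_nonneg_left h1 (abs_nonneg t)

lemma chernoff_sum_ind {ι : Type*} {g : ι → Ω → ℝ}
    (hind : iIndepFun g μ) (hmeas : ∀ k, Measurable (g k))
    (s : Finset ι) {p : ℝ}
    (hbound : ∀ k ∈ s, ∀ τ : ℝ, |τ| ≤ 1 → mgf (g k) μ τ ≤ Real.exp (p * τ + τ ^ 2))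
    (hval : ∀ k ω, 0 ≤ g k ω ∧ g k ω ≤ 1)
    {δ : ℝ} (hδ0 : 0 < δ) (hδ2 : δ ≤ 2) :
    μ {ω | (s.card : ℝ) * p + s.card * δ ≤ ∑ k ∈ s, g k ω} ≤
        ENNReal.ofReal (Real.exp (-(s.card : ℝ) * δ ^ 2 / 4)) ∧
      μ {ω | ∑ k ∈ s, g k ω ≤ (s.card : ℝ) * p - s.card * δ} ≤
        ENNReal.ofReal (Real.exp (-(s.card : ℝ) * δ ^ 2 / 4)) := by
  set τ := δ / 2 with hτ
  have hτ0 : 0 < τ := by positivity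
  have hτ1 : |τ| ≤ 1 := by rw [abs_of_pos hτ0]; linarith
  have hmgf : ∀ t : ℝ, |t| ≤ 1 →
      mgf (fun ω => ∑ k ∈ s, g k ω) μ t ≤ Real.exp ((s.card : ℝ) * (p * t + t ^ 2)) := by
    intro t ht
    have h1 : mgf (fun ω => ∑ k ∈ s, g k ω) μ t = ∏ k ∈ s, mgf (g k) μ t := by
      have := hind.mgf_sum hmeas s (t := t)
      convert this using 2
      ext ω
      simp
    rw [h1]
    calc ∏ k ∈ s, mgf (g k) μ t ≤ ∏ k ∈ s, Real.exp (p * t + t ^ 2) :=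
          Finset.prod_le_prod (fun k _ => mgf_nonneg) (fun k hk => hbound k hk t ht)
      _ = Real.exp ((s.card : ℝ) * (p * t + t ^ 2)) := by
          rw [Finset.prod_const, ← Real.exp_nat_mul]
  have hkey : -τ * ((s.card:ℝ) * p + s.card * δ) + (s.card : ℝ) * (p * τ + τ ^ 2) =
      -(s.card : ℝ) * δ ^ 2 / 4 := by rw [hτ]; ring
  have hkey2 : τ * ((s.card:ℝ) * p - s.card * δ) + (s.card : ℝ) * (p * (-τ) + (-τ) ^ 2) =
      -(s.card : ℝ) * δ ^ 2 / 4 := by rw [hτ]; ring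
  constructor
  · have h := measure_ge_le_exp_mul_mgf (μ := μ) (X := fun ω => ∑ k ∈ s, g k ω)
      ((s.card : ℝ) * p + s.card * δ) hτ0.le (integrable_exp_sum_ind hmeas s hval τ)
    rw [ENNReal.le_ofReal_iff_toReal_le (measure_ne_top μ _) (Real.exp_pos _).le]
    calc (μ _).toReal ≤ _ := h
      _ ≤ Real.exp (-τ * ((s.card:ℝ) * p + s.card * δ)) *
            Real.exp ((s.card : ℝ) * (p * τ + τ ^ 2)) := by
          apply mul_le_mul_of_nonneg_left (hmgf τ hτ1) (Real.exp_pos _).le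
      _ = Real.exp (-(s.card : ℝ) * δ ^ 2 / 4) := by rw [← Real.exp_add, hkey]
  · have h := measure_le_le_exp_mul_mgf (μ := μ) (X := fun ω => ∑ k ∈ s, g k ω)
      ((s.card : ℝ) * p - s.card * δ) (t := -τ) (by linarith)
      (integrable_exp_sum_ind hmeas s hval (-τ))
    rw [ENNReal.le_ofReal_iff_toReal_le (measure_ne_top μ _) (Real.exp_pos _).le]
    calc (μ _).toReal ≤ _ := h
      _ ≤ Real.exp (-(-τ) * ((s.card:ℝ) * p - s.card * δ)) *
            Real.exp ((s.card : ℝ) * (p * (-τ) + (-τ) ^ 2)) := by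
          apply mul_le_mul_of_nonneg_left (hmgf (-τ) (by rwa [abs_neg])) (Real.exp_pos _).le
      _ = Real.exp (-(s.card : ℝ) * δ ^ 2 / 4) := by
          rw [← Real.exp_add, neg_neg, hkey2]

/-- Tail bounds for the empirical count of one of the two samples. -/
lemma tail_bounds {W : (ℕ ⊕ ℕ) → Ω → ℝ}
    (hindep : iIndepFun W μ)
    (hmeasW : ∀ k, Measurable (W k)) (e : ℕ ↪ ℕ ⊕ ℕ) (n : ℕ) (t : ℝ)
    (hcdf : ∀ j, μ {ω | W (e j) ω ≤ t} = ENNReal.ofReal (unitExpCDF t))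
    {δ : ℝ} (hδ0 : 0 < δ) (hδ2 : δ ≤ 2) :
    μ {ω | (n : ℝ) * unitExpCDF t + n * δ ≤
        ∑ j ∈ Finset.range n, (if W (e j) ω ≤ t then (1:ℝ) else 0)} ≤
      ENNReal.ofReal (Real.exp (-(n : ℝ) * δ ^ 2 / 4)) ∧
    μ {ω | (∑ j ∈ Finset.range n, if W (e j) ω ≤ t then (1:ℝ) else 0) ≤
        (n : ℝ) * unitExpCDF t - n * δ} ≤
      ENNReal.ofReal (Real.exp (-(n : ℝ) * δ ^ 2 / 4)) := by
  set g : (ℕ ⊕ ℕ) → Ω → ℝ := fun k ω => if W k ω ≤ t then (1:ℝ) else 0 with hg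
  have hindg : iIndepFun g μ := by
    exact hindep.comp (fun _ => fun x : ℝ => if x ≤ t then (1:ℝ) else 0)
      (fun _ => Measurable.ite measurableSet_Iic measurable_const measurable_const)
  have hmeasg : ∀ k, Measurable (g k) :=
    fun k => Measurable.ite (hmeasW k measurableSet_Iic) measurable_const measurable_const
  set s : Finset (ℕ ⊕ ℕ) := (Finset.range n).map e with hs
  have hcard : (s.card : ℝ) = n := by rw [hs, Finset.card_map, Finset.card_range]
  have hsum : ∀ ω, ∑ k ∈ s, g k ω = ∑ j ∈ Finset.range n, (if W (e j) ω ≤ t then (1:ℝ) else 0) := by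
    intro ω
    rw [hs, Finset.sum_map]
  have hbound : ∀ k ∈ s, ∀ τ : ℝ, |τ| ≤ 1 →
      mgf (g k) μ τ ≤ Real.exp (unitExpCDF t * τ + τ ^ 2) := by
    intro k hk τ hτ
    rw [hs, Finset.mem_map] at hk
    obtain ⟨j, _, rfl⟩ := hk
    exact mgf_ind_le (hmeasW _) (unitExpCDF_nonneg t) (unitExpCDF_lt_one t).le (hcdf j) hτ
  have hval : ∀ k ω, 0 ≤ g k ω ∧ g k ω ≤ 1 := by
    intro k ω
    rw [hg]
    by_cases h : W k ω ≤ t <;> simp [h]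
  have H := chernoff_sum_ind hindg hmeasg s hbound hval hδ0 hδ2
  constructor
  · refine le_trans (le_of_eq ?_) (le_trans H.1 (le_of_eq (by rw [hcard])))
    congr 1
    ext ω
    simp only [Set.mem_setOf_eq, hsum, hcard]
  · refine le_trans (le_of_eq ?_) (le_trans H.2 (le_of_eq (by rw [hcard])))
    congr 1
    ext ω
    simp only [Set.mem_setOf_eq, hsum, hcard]

end Prob1

section Prob2
set_option linter.unusedSectionVars false
variable {Ω : Type*} [MeasurableSpace Ω] {μ : Measure Ω} [IsProbabilityMeasure μ]

/-- The two bad events for one clipped order statistic of one sample. -/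
lemma bad_bounds {W : (ℕ ⊕ ℕ) → Ω → ℝ}
    (hindep : iIndepFun W μ)
    (hmeasW : ∀ k, Measurable (W k)) (e : ℕ ↪ ℕ ⊕ ℕ)
    (hcdf : ∀ j (x : ℝ), μ {ω | W (e j) ω ≤ x} = ENNReal.ofReal (unitExpCDF x))
    {n : ℕ} (hn : 2 ≤ n) {un vn δ : ℝ} (hu0 : 0 < un) (huv : un < vn)
    (hδ0 : 0 < δ) (hδ2 : δ ≤ 2)
    (i : Fin n) :
    μ {ω | expQ (min (max ((((i:ℕ):ℝ)+1)/n + δ) (unitExpCDF un)) (unitExpCDF vn)) <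
        max (min vn (orderStat n (fun j => W (e j) ω) (i + 1))) un} ≤
      ENNReal.ofReal (Real.exp (-(n:ℝ) * δ ^ 2 / 4)) ∧
    μ {ω | max (min vn (orderStat n (fun j => W (e j) ω) (i + 1))) un <
        expQ (min (max ((((i:ℕ):ℝ)+1)/n - δ) (unitExpCDF un)) (unitExpCDF vn))} ≤
      ENNReal.ofReal (Real.exp (-(n:ℝ) * δ ^ 2 / 4)) := by
  set Fu := unitExpCDF un with hFudef
  set Fv := unitExpCDF vn with hFvdef
  have hFu0 : 0 < Fu := unitExpCDF_pos hu0
  have hFv1 : Fv < 1 := unitExpCDF_lt_one vn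
  have hFuv : Fu ≤ Fv := unitExpCDF_mono huv.le
  have hv0 : (0:ℝ) < vn := lt_trans hu0 huv
  have hn0 : (0:ℝ) < n := by positivity
  set p : ℝ := (((i:ℕ):ℝ)+1)/n with hpdef
  have hnp : (n:ℝ) * p = ((i:ℕ):ℝ) + 1 := by
    rw [hpdef]; field_simp
  -- the real-valued count
  have hcount : ∀ ω (t : ℝ), orderStat n (fun j => W (e j) ω) (i + 1) ≤ t ↔
      ((i:ℕ):ℝ) + 1 ≤ ∑ j ∈ Finset.range n, (if W (e j) ω ≤ t then (1:ℝ) else 0) := by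
    intro ω t
    rw [orderStat_le_iff _ i.isLt, ← countP_eq_sum_ind]
    exact_mod_cast Iff.rfl
  have hcountle : ∀ ω (t : ℝ), ¬ (orderStat n (fun j => W (e j) ω) (i + 1) ≤ t) →
      (∑ j ∈ Finset.range n, (if W (e j) ω ≤ t then (1:ℝ) else 0)) ≤ ((i:ℕ):ℝ) := by
    intro ω t h
    rw [orderStat_le_iff _ i.isLt] at h
    push_neg at h
    have : (List.ofFn fun j : Fin n => W (e j) ω).countP (fun x => decide (x ≤ t)) ≤ (i:ℕ) := by
      omega
    calc (∑ j ∈ Finset.range n, (if W (e j) ω ≤ t then (1:ℝ) else 0))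
        = (((List.ofFn fun j : Fin n => W (e j) ω).countP (fun x => decide (x ≤ t)) : ℕ) : ℝ) :=
          (countP_eq_sum_ind _ t).symm
      _ ≤ ((i:ℕ):ℝ) := by exact_mod_cast this
  constructor
  · -- upper bad event
    set b := min (max (p + δ) Fu) Fv with hbdef
    have hFb : Fu ≤ b := le_min (le_max_right _ _) hFuv
    have hbFv : b ≤ Fv := min_le_right _ _
    rcases eq_or_lt_of_le hbFv with hcase | hcase
    · -- H = vn, event empty
      have hH : expQ b = vn := by rw [hcase, hFvdef, expQ_unitExpCDF hv0.le]
      have hempty : {ω | expQ b <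
          max (min vn (orderStat n (fun j => W (e j) ω) (i + 1))) un} = ∅ := by
        ext ω
        simp only [Set.mem_setOf_eq, Set.mem_empty_iff_false, iff_false, not_lt, hH]
        exact max_le (min_le_left _ _) huv.le
      rw [hempty]
      simp
    · -- b < Fv
      have hbmax : b = max (p + δ) Fu := by
        rcases min_cases (max (p + δ) Fu) Fv with ⟨h1, _⟩ | ⟨h1, h2⟩
        · exact h1
        · rw [hbdef] at hcase; rw [h1] at hcase; exact absurd hcase (lt_irrefl _)
      have hbp : p + δ ≤ b := hbmax ▸ le_max_left _ _
      have hb1 : b < 1 := lt_trans hcase hFv1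
      have hb0 : 0 ≤ b := le_trans hFu0.le hFb
      have hHF : unitExpCDF (expQ b) = b := unitExpCDF_expQ hb0 hb1
      have hHu : un ≤ expQ b := by
        rw [← expQ_unitExpCDF hu0.le]
        exact expQ_mono hFb hb1
      have hsub : {ω | expQ b <
            max (min vn (orderStat n (fun j => W (e j) ω) (i + 1))) un} ⊆
          {ω | (∑ j ∈ Finset.range n, if W (e j) ω ≤ expQ b then (1:ℝ) else 0) ≤
            (n : ℝ) * unitExpCDF (expQ b) - n * δ} := by
        intro ω hω
        simp only [Set.mem_setOf_eq] at hω ⊢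
        have hxo : ¬ (orderStat n (fun j => W (e j) ω) (i + 1) ≤ expQ b) := by
          intro hle
          have : max (min vn (orderStat n (fun j => W (e j) ω) (i + 1))) un ≤ expQ b :=
            max_le (le_trans (min_le_right _ _) hle) hHu
          linarith
        have h1 := hcountle ω _ hxo
        have h2 : (n:ℝ) * unitExpCDF (expQ b) - n * δ ≥ ((i:ℕ):ℝ) + 1 := by
          rw [hHF]
          have : (n:ℝ) * b ≥ (n:ℝ) * (p + δ) := by
            apply mul_le_mul_of_nonneg_left hbp hn0.le
          rw [mul_add, hnp] at this
          linarith
        linarith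
      exact le_trans (measure_mono hsub)
        (tail_bounds hindep hmeasW e n (expQ b) (fun j => hcdf j _) hδ0 hδ2).2
  · -- lower bad event
    set a := min (max (p - δ) Fu) Fv with hadef
    have hFa : Fu ≤ a := le_min (le_max_right _ _) hFuv
    have haFv : a ≤ Fv := min_le_right _ _
    have ha1 : a < 1 := lt_of_le_of_lt haFv hFv1
    have ha0 : 0 ≤ a := le_trans hFu0.le hFa
    rcases eq_or_lt_of_le hFa with hcase | hcase
    · -- L = un, event empty
      have hL : expQ a = un := by rw [← hcase, hFudef, expQ_unitExpCDF hu0.le]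
      have hempty : {ω | max (min vn (orderStat n (fun j => W (e j) ω) (i + 1))) un <
          expQ a} = ∅ := by
        ext ω
        simp only [Set.mem_setOf_eq, Set.mem_empty_iff_false, iff_false, not_lt, hL]
        exact le_max_right _ _
      rw [hempty]
      simp
    · -- Fu < a, so a ≤ p - δ
      have hap : a ≤ p - δ := by
        have hmax : Fu < max (p - δ) Fu := lt_of_lt_of_le hcase (min_le_left _ _)
        have : max (p - δ) Fu = p - δ := by
          rcases max_cases (p - δ) Fu with ⟨h1, _⟩ | ⟨h1, h2⟩
          · exact h1
          · rw [h1] at hmax; exact absurd hmax (lt_irrefl _)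
        calc a ≤ max (p - δ) Fu := min_le_left _ _
          _ = p - δ := this
      have hLF : unitExpCDF (expQ a) = a := unitExpCDF_expQ ha0 ha1
      have hLv : expQ a ≤ vn := by
        rw [← expQ_unitExpCDF hv0.le]
        exact expQ_mono haFv hFv1
      have hsub : {ω | max (min vn (orderStat n (fun j => W (e j) ω) (i + 1))) un <
            expQ a} ⊆
          {ω | (n : ℝ) * unitExpCDF (expQ a) + n * δ ≤
            ∑ j ∈ Finset.range n, (if W (e j) ω ≤ expQ a then (1:ℝ) else 0)} := by
        intro ω hω
        simp only [Set.mem_setOf_eq] at hω ⊢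
        have hmin : min vn (orderStat n (fun j => W (e j) ω) (i + 1)) < expQ a :=
          lt_of_le_of_lt (le_max_left _ _) hω
        have hxo : orderStat n (fun j => W (e j) ω) (i + 1) ≤ expQ a := by
          rcases min_cases vn (orderStat n (fun j => W (e j) ω) (i + 1)) with ⟨h1, h2⟩ | ⟨h1, h2⟩
          · rw [h1] at hmin; linarith
          · rw [h1] at hmin; exact hmin.le
        have h1 := (hcount ω _).mp hxo
        have h2 : (n:ℝ) * unitExpCDF (expQ a) + n * δ ≤ ((i:ℕ):ℝ) + 1 := by
          rw [hLF]
          have : (n:ℝ) * a ≤ (n:ℝ) * (p - δ) := by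
            apply mul_le_mul_of_nonneg_left hap hn0.le
          nlinarith [hnp]
        linarith
      exact le_trans (measure_mono hsub)
        (tail_bounds hindep hmeasW e n (expQ a) (fun j => hcdf j _) hδ0 hδ2).1


end Prob2

lemma dist_iSup_lt {n : ℕ} (hn : 2 ≤ n) {ε r : ℝ} (hε : 0 < ε) (hr2 : r ≤ ε / 2) (hr0 : 0 ≤ r)
    {L H cX cY : Fin n → ℝ}
    (hL0 : ∀ i, 0 < L i)
    (hs : ∀ i, H i ≤ L i * (1 + r))
    (hXb : ∀ i, L i ≤ cX i ∧ cX i ≤ H i) (hYb : ∀ i, L i ≤ cY i ∧ cY i ≤ H i) :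
    dist (⨆ i : Fin n, cX i / cY i) 1 < ε := by
  haveI : Nonempty (Fin n) := ⟨⟨0, by omega⟩⟩
  have hHL : ∀ i, L i ≤ H i := fun i => le_trans (hXb i).1 (hXb i).2
  have hub : ∀ i, cX i / cY i ≤ 1 + r := by
    intro i
    have hH0 : (0:ℝ) ≤ H i := le_trans (hL0 i).le (hHL i)
    calc cX i / cY i ≤ H i / L i := div_le_div₀ hH0 (hXb i).2 (hL0 i) (hYb i).1
      _ ≤ 1 + r := by
          rw [div_le_iff₀ (hL0 i)]
          linarith [hs i]
  have hlb : ∀ i, 1 - r ≤ cX i / cY i := by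
    intro i
    have hH0 : 0 < H i := lt_of_lt_of_le (hL0 i) (hHL i)
    have hcY0 : 0 < cY i := lt_of_lt_of_le (hL0 i) (hYb i).1
    calc (1:ℝ) - r ≤ L i / H i := by
          rw [le_div_iff₀ hH0]
          nlinarith [hs i, (hL0 i).le, hHL i]
      _ ≤ cX i / cY i :=
          div_le_div₀ (le_trans (hL0 i).le (hXb i).1) (hXb i).1 hcY0 (hYb i).2
  have hbdd : BddAbove (Set.range fun i : Fin n => cX i / cY i) :=
    Set.Finite.bddAbove (Set.finite_range _)
  have hQub : (⨆ i : Fin n, cX i / cY i) ≤ 1 + r := ciSup_le hub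
  have hQlb : 1 - r ≤ ⨆ i : Fin n, cX i / cY i :=
    le_trans (hlb ⟨0, by omega⟩) (le_ciSup hbdd ⟨0, by omega⟩)
  rw [Real.dist_eq, abs_lt]
  constructor <;> [linarith; linarith]

/-- For independent i.i.d. unit exponential samples, if thresholds
`0 < u_n < v_n` satisfy `min{F(u_n), 1-F(v_n)}/√(log n / n) → ∞` where `F` is the unit
exponential CDF, then
`q_n^{(u_n,v_n)} = max_{1≤i≤n} max{min{v_n, X_(i)}, u_n} / max{min{v_n, Y_(i)}, u_n}`
converges in probability to `1`. -/
theorem stmt3 {Ω : Type*} [MeasurableSpace Ω] (μ : Measure Ω) [IsProbabilityMeasure μ]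
    (X Y : ℕ → Ω → ℝ)
    (hmeas : ∀ j, Measurable (Sum.elim X Y j))
    (hindep : iIndepFun (Sum.elim X Y) μ)
    (hX : ∀ i x, μ {ω | X i ω ≤ x} = ENNReal.ofReal (unitExpCDF x))
    (hY : ∀ i x, μ {ω | Y i ω ≤ x} = ENNReal.ofReal (unitExpCDF x))
    (u v : ℕ → ℝ)
    (huv : ∀ n : ℕ, 0 < u n ∧ u n < v n)
    (hcond : Tendsto (fun n : ℕ =>
      min (unitExpCDF (u n)) (1 - unitExpCDF (v n)) / Real.sqrt (Real.log n / n))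
      atTop atTop) :
    TendstoInMeasure μ
      (fun n ω => ⨆ i : Fin n,
        max (min (v n) (orderStat n (fun j => X j ω) (i + 1))) (u n) /
          max (min (v n) (orderStat n (fun j => Y j ω) (i + 1))) (u n))
      atTop (fun _ => (1 : ℝ)) := by
  classical
  rw [tendstoInMeasure_iff_dist]
  intro ε hε
  set C : ℝ := max 16 (32 * Real.exp 1 / ε) with hCdef
  have hC16 : (16:ℝ) ≤ C := le_max_left _ _
  have hCe : 32 * Real.exp 1 / ε ≤ C := le_max_right _ _
  have he1 : (1:ℝ) ≤ Real.exp 1 := by linarith [Real.add_one_le_exp (1:ℝ)]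
  have hCpos : (0:ℝ) < C := by linarith
  have hBtend : Tendsto (fun n : ℕ =>
      ENNReal.ofReal (4 * (n:ℝ) * Real.exp (-4 * Real.log n))) atTop (𝓝 0) := by
    have h1 : Tendsto (fun n : ℕ => 4 * (n:ℝ)⁻¹) atTop (𝓝 0) := by
      have h := tendsto_inv_atTop_nhds_zero_nat (𝕜 := ℝ)
      have h' := h.const_mul (4:ℝ)
      simpa using h'
    have h2 : Tendsto (fun n : ℕ => 4 * (n:ℝ) * Real.exp (-4 * Real.log n)) atTop (𝓝 0) := by
      apply squeeze_zero' ?_ ?_ h1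
      · filter_upwards [eventually_ge_atTop 1] with n hn
        have : (0:ℝ) < n := by exact_mod_cast hn
        positivity
      · filter_upwards [eventually_ge_atTop 1] with n hn
        have hn1 : (1:ℝ) ≤ n := by exact_mod_cast hn
        have hnpos : (0:ℝ) < n := by linarith
        have hlog : 0 ≤ Real.log n := Real.log_nonneg hn1
        have hexp : (n:ℝ) = Real.exp (Real.log n) := (Real.exp_log hnpos).symm
        calc 4 * (n:ℝ) * Real.exp (-4 * Real.log n)
            = 4 * Real.exp (Real.log n + -4 * Real.log n) := by
              rw [Real.exp_add, ← hexp]; ring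
          _ ≤ 4 * Real.exp (-Real.log n) := by
              have := Real.exp_le_exp.mpr
                (show Real.log n + -4 * Real.log n ≤ -Real.log n by linarith)
              linarith
          _ = 4 * (n:ℝ)⁻¹ := by rw [Real.exp_neg, Real.exp_log hnpos]
    have h3 := ENNReal.tendsto_ofReal (a := (0:ℝ)) h2
    simpa using h3
  apply tendsto_of_tendsto_of_tendsto_of_le_of_le' tendsto_const_nhds hBtend
  · exact Filter.Eventually.of_forall fun n => zero_le
  filter_upwards [eventually_ge_atTop 2, hcond.eventually_ge_atTop C] with n hn2 hCn
  obtain ⟨hu0, huvn⟩ := huv n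
  set Fu : ℝ := unitExpCDF (u n) with hFudef
  set Fv : ℝ := unitExpCDF (v n) with hFvdef
  set m : ℝ := min Fu (1 - Fv) with hmdef
  set sq : ℝ := Real.sqrt (Real.log n / n) with hsqdef
  have hn2R : (2:ℝ) ≤ n := by exact_mod_cast hn2
  have hnpos : (0:ℝ) < n := by linarith
  have hlogpos : 0 < Real.log n := Real.log_pos (by linarith)
  have hsqpos : 0 < sq := Real.sqrt_pos.mpr (by positivity)
  have hmsq : C * sq ≤ m := by
    rw [le_div_iff₀ hsqpos] at hCn
    linarith
  have hm1 : m ≤ 1 := le_trans (min_le_left _ _) (unitExpCDF_lt_one (u n)).le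
  set δ : ℝ := 4 * sq with hδdef
  have hδ0 : 0 < δ := by positivity
  have hδm : 4 * δ ≤ m := by nlinarith
  have hδ2 : δ ≤ 2 := by nlinarith
  have hm0 : 0 < m := lt_of_lt_of_le (by positivity) hmsq
  set r : ℝ := 4 * Real.exp 1 * δ / m with hrdef
  have hr0 : 0 ≤ r := by positivity
  have hr2 : r ≤ ε / 2 := by
    have h2 : r * C ≤ 16 * Real.exp 1 := by
      rw [hrdef, div_mul_eq_mul_div, div_le_iff₀ hm0]
      calc 4 * Real.exp 1 * δ * C = Real.exp 1 * (C * sq) * 16 := by rw [hδdef]; ring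
        _ ≤ Real.exp 1 * m * 16 := by nlinarith
        _ = 16 * Real.exp 1 * m := by ring
    have h3 : 32 * Real.exp 1 ≤ C * ε := by
      rw [div_le_iff₀ hε] at hCe; linarith
    nlinarith
  -- the bad event family
  set E : Fin n → Set Ω := fun i =>
    {ω | expQ (min (max ((((i:ℕ):ℝ)+1)/n + δ) Fu) Fv) <
        max (min (v n) (orderStat n (fun j => X j ω) (i + 1))) (u n)} ∪
    {ω | max (min (v n) (orderStat n (fun j => X j ω) (i + 1))) (u n) <
        expQ (min (max ((((i:ℕ):ℝ)+1)/n - δ) Fu) Fv)} ∪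
    {ω | expQ (min (max ((((i:ℕ):ℝ)+1)/n + δ) Fu) Fv) <
        max (min (v n) (orderStat n (fun j => Y j ω) (i + 1))) (u n)} ∪
    {ω | max (min (v n) (orderStat n (fun j => Y j ω) (i + 1))) (u n) <
        expQ (min (max ((((i:ℕ):ℝ)+1)/n - δ) Fu) Fv)} with hE
  have hsubset : {ω | ε ≤ dist (⨆ i : Fin n,
      max (min (v n) (orderStat n (fun j => X j ω) (i + 1))) (u n) /
        max (min (v n) (orderStat n (fun j => Y j ω) (i + 1))) (u n)) 1} ⊆ ⋃ i, E i := by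
    intro ω hω
    by_contra hB
    simp only [hE, Set.mem_iUnion, Set.mem_union, Set.mem_setOf_eq, not_exists, not_or,
      not_lt] at hB
    have hsand := fun i : Fin n =>
      clip_sandwich (p := (((i:ℕ):ℝ)+1)/n) hu0 huvn hδ0 hδm
    have hdist := dist_iSup_lt hn2 hε hr2 hr0
      (L := fun i => expQ (min (max ((((i:ℕ):ℝ)+1)/n - δ) Fu) Fv))
      (H := fun i => expQ (min (max ((((i:ℕ):ℝ)+1)/n + δ) Fu) Fv))
      (cX := fun i => max (min (v n) (orderStat n (fun j => X j ω) (i + 1))) (u n))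
      (cY := fun i => max (min (v n) (orderStat n (fun j => Y j ω) (i + 1))) (u n))
      (fun i => lt_of_lt_of_le hu0 (hsand i).1)
      (fun i => (hsand i).2.2.2)
      (fun i => ⟨(hB i).1.1.2, (hB i).1.1.1⟩)
      (fun i => ⟨(hB i).2, (hB i).1.2⟩)
    rw [Set.mem_setOf_eq] at hω
    exact absurd hω (not_le.mpr hdist)
  have hXbd := fun i : Fin n => bad_bounds (μ := μ) hindep hmeas
    ⟨Sum.inl, Sum.inl_injective⟩ (fun j x => hX j x) hn2 hu0 huvn hδ0 hδ2 i
  have hYbd := fun i : Fin n => bad_bounds (μ := μ) hindep hmeas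
    ⟨Sum.inr, Sum.inr_injective⟩ (fun j x => hY j x) hn2 hu0 huvn hδ0 hδ2 i
  have hEi : ∀ i : Fin n, μ (E i) ≤
      4 * ENNReal.ofReal (Real.exp (-(n:ℝ) * δ ^ 2 / 4)) := by
    intro i
    rw [hE]
    simp only []
    calc μ (_ ∪ _ ∪ _ ∪ _) ≤ μ (_ ∪ _ ∪ _) + μ _ := measure_union_le _ _
      _ ≤ (μ (_ ∪ _) + μ _) + μ _ := by
          gcongr
          exact measure_union_le _ _
      _ ≤ ((μ _ + μ _) + μ _) + μ _ := by
          gcongr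
          exact measure_union_le _ _
      _ ≤ ((ENNReal.ofReal (Real.exp (-(n:ℝ) * δ ^ 2 / 4)) +
            ENNReal.ofReal (Real.exp (-(n:ℝ) * δ ^ 2 / 4))) +
            ENNReal.ofReal (Real.exp (-(n:ℝ) * δ ^ 2 / 4))) +
            ENNReal.ofReal (Real.exp (-(n:ℝ) * δ ^ 2 / 4)) := by
          gcongr
          · exact (hXbd i).1
          · exact (hXbd i).2
          · exact (hYbd i).1
          · exact (hYbd i).2
      _ = 4 * ENNReal.ofReal (Real.exp (-(n:ℝ) * δ ^ 2 / 4)) := by ring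
  have hδsq : δ ^ 2 = 16 * (Real.log n / n) := by
    rw [hδdef, mul_pow, Real.sq_sqrt (by positivity)]
    norm_num
  have hexp_eq : -(n:ℝ) * δ ^ 2 / 4 = -4 * Real.log n := by
    rw [hδsq]
    field_simp
    ring
  calc μ {ω | ε ≤ dist (⨆ i : Fin n,
      max (min (v n) (orderStat n (fun j => X j ω) (i + 1))) (u n) /
        max (min (v n) (orderStat n (fun j => Y j ω) (i + 1))) (u n)) 1}
      ≤ μ (⋃ i, E i) := measure_mono hsubset
    _ ≤ ∑' i : Fin n, μ (E i) := measure_iUnion_le _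
    _ ≤ ∑' i : Fin n, (4 * ENNReal.ofReal (Real.exp (-(n:ℝ) * δ ^ 2 / 4))) :=
        ENNReal.tsum_le_tsum hEi
    _ = (n : ℝ≥0∞) * (4 * ENNReal.ofReal (Real.exp (-(n:ℝ) * δ ^ 2 / 4))) := by
        rw [tsum_fintype]
        simp [Finset.sum_const, nsmul_eq_mul, Finset.card_univ]
    _ = ENNReal.ofReal (4 * (n:ℝ) * Real.exp (-4 * Real.log n)) := by
        rw [hexp_eq, ← ENNReal.ofReal_natCast n, ← ENNReal.ofReal_ofNat 4,
          ← ENNReal.ofReal_mul (by norm_num : (0:ℝ) ≤ 4),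
          ← ENNReal.ofReal_mul (by positivity : (0:ℝ) ≤ (n:ℝ))]
        congr 1
        ring
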